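/- Let y be a Gaussian random variable with mean μ and variance σ², σ > 0, let a ∈ ℝ be the failure threshold, and let δ > 0. Define z⁺ = (a + δ − μ)/σ and z⁻ = (a − δ − μ)/σ, and let Φ and φ denote the standard normal cumulative distribution function and density, respectively. Then the expected improvement E[max(δ² − (y − a)², 0)] equals (δ² − (μ − a)² − σ²)·(Φ(z⁺) − Φ(z⁻)) + σ²·(z⁺·φ(z⁺) − z⁻·φ(z⁻)) + 2(μ − a)·σ·(φ(z⁺) − φ(z⁻)). -/

import Mathlib

open MeasureTheory ProbabilityTheory Real

/-- The standard normal probability density function. -/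
noncomputable def stdNormalPDF (t : ℝ) : ℝ :=
  (1 / Real.sqrt (2 * Real.pi)) * Real.exp (-t ^ 2 / 2)

/-- The standard normal cumulative distribution function. -/
noncomputable def stdNormalCDF (t : ℝ) : ℝ :=
  ∫ u in Set.Iic t, stdNormalPDF u

lemma continuous_stdNormalPDF : Continuous stdNormalPDF := by
  unfold stdNormalPDF; fun_prop

lemma integrable_stdNormalPDF : Integrable stdNormalPDF := by
  have h : stdNormalPDF = fun x => (1 / Real.sqrt (2 * Real.pi)) * Real.exp (-(1/2) * x ^ 2) := by
    ext x; unfold stdNormalPDF; ring_nf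
  rw [h]
  exact (integrable_exp_neg_mul_sq (by norm_num)).const_mul _

lemma hasDerivAt_stdNormalPDF (t : ℝ) :
    HasDerivAt stdNormalPDF (-t * stdNormalPDF t) t := by
  have h1 : HasDerivAt (fun x : ℝ => -x ^ 2 / 2) (-t) t := by
    have := ((hasDerivAt_pow 2 t).neg).div_const 2
    refine this.congr_deriv ?_
    simp; ring
  have h2 := (h1.exp).const_mul (1 / Real.sqrt (2 * Real.pi))
  refine h2.congr_deriv ?_
  unfold stdNormalPDF; ring

lemma hasDerivAt_stdNormalCDF (t : ℝ) :
    HasDerivAt stdNormalCDF (stdNormalPDF t) t := by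
  have key : stdNormalCDF = fun x => (∫ u in (0:ℝ)..x, stdNormalPDF u) + stdNormalCDF 0 := by
    ext x
    rw [← intervalIntegral.integral_Iic_sub_Iic
      (integrable_stdNormalPDF.integrableOn) (integrable_stdNormalPDF.integrableOn)]
    unfold stdNormalCDF; ring
  rw [key]
  have h := intervalIntegral.integral_hasDerivAt_right
    (continuous_stdNormalPDF.intervalIntegrable 0 t)
    (continuous_stdNormalPDF.stronglyMeasurableAtFilter _ _)
    continuous_stdNormalPDF.continuousAt
  simpa using h.add_const (stdNormalCDF 0)

/-- Closed form for the expected improvement of Ranjan et al.: for a Gaussian random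
variable `y ~ N(m, σ²)`, threshold `a` and band half-width `δ > 0`, with
`z⁺ = (a + δ - m)/σ`, `z⁻ = (a - δ - m)/σ`,
`E[max(δ² - (y - a)², 0)] = (δ² - (m - a)² - σ²)(Φ(z⁺) - Φ(z⁻))
  + σ²(z⁺ φ(z⁺) - z⁻ φ(z⁻)) + 2(m - a) σ (φ(z⁺) - φ(z⁻))`. -/
theorem ranjan_expected_improvement
    (m σ a δ : ℝ) (hσ : 0 < σ) (hδ : 0 < δ) :
    (∫ y, max (δ ^ 2 - (y - a) ^ 2) 0 ∂(gaussianReal m (Real.toNNReal (σ ^ 2))))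
      = (δ ^ 2 - (m - a) ^ 2 - σ ^ 2)
          * (stdNormalCDF ((a + δ - m) / σ) - stdNormalCDF ((a - δ - m) / σ))
        + σ ^ 2 * (((a + δ - m) / σ) * stdNormalPDF ((a + δ - m) / σ)
                - ((a - δ - m) / σ) * stdNormalPDF ((a - δ - m) / σ))
        + 2 * (m - a) * σ
          * (stdNormalPDF ((a + δ - m) / σ) - stdNormalPDF ((a - δ - m) / σ)) := by
  set v : NNReal := Real.toNNReal (σ ^ 2) with hv
  have hv0 : v ≠ 0 := by
    simp [hv, Real.toNNReal_eq_zero, not_le]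
    positivity
  have hvr : (v : ℝ) = σ ^ 2 := Real.coe_toNNReal _ (by positivity)
  -- the gaussian pdf in terms of the standard normal pdf
  have hpdf : ∀ y : ℝ, gaussianPDFReal m v y = (1 / σ) * stdNormalPDF ((y - m) / σ) := by
    intro y
    unfold gaussianPDFReal stdNormalPDF
    rw [hvr]
    rw [show 2 * π * σ ^ 2 = (2 * π) * σ ^ 2 by ring, Real.sqrt_mul (by positivity),
      Real.sqrt_sq hσ.le]
    rw [div_pow, neg_div]
    field_simp
  -- rewrite the measure integral as a volume integral against the density
  have step1 : (∫ y, max (δ ^ 2 - (y - a) ^ 2) 0 ∂(gaussianReal m v))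
      = ∫ y, gaussianPDFReal m v y * max (δ ^ 2 - (y - a) ^ 2) 0 := by
    rw [gaussianReal_of_var_ne_zero _ hv0]
    have : gaussianPDF m v
        = fun y => ((Real.toNNReal (gaussianPDFReal m v y) : NNReal) : ENNReal) := by
      ext y; simp [gaussianPDF, ENNReal.ofReal]
    rw [this, integral_withDensity_eq_integral_smul
      ((measurable_gaussianPDFReal m v).real_toNNReal) _]
    congr 1
    ext y
    simp [NNReal.smul_def, Real.coe_toNNReal _ (gaussianPDFReal_nonneg m v y)]
  rw [step1]
  set A : ℝ := δ ^ 2 - (m - a) ^ 2 - σ ^ 2 with hA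
  set B : ℝ := 2 * (m - a) * σ with hB
  set g : ℝ → ℝ := fun y => gaussianPDFReal m v y * (δ ^ 2 - (y - a) ^ 2) with hg
  set F : ℝ → ℝ := fun u => A * stdNormalCDF u + σ ^ 2 * (u * stdNormalPDF u)
    + B * stdNormalPDF u with hF
  have hgc : Continuous g := by
    have : g = fun y => ((1 / σ) * stdNormalPDF ((y - m) / σ)) * (δ ^ 2 - (y - a) ^ 2) := by
      ext y; simp only [hg]; rw [hpdf y]
    rw [this]
    have := continuous_stdNormalPDF
    fun_prop
  have step2 : (∫ y, gaussianPDFReal m v y * max (δ ^ 2 - (y - a) ^ 2) 0)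
      = ∫ y in (a - δ)..(a + δ), g y := by
    rw [intervalIntegral.integral_of_le (by linarith)]
    rw [← setIntegral_eq_integral_of_forall_compl_eq_zero
      (s := Set.Ioc (a - δ) (a + δ))
      (f := fun y => gaussianPDFReal m v y * max (δ ^ 2 - (y - a) ^ 2) 0)]
    · apply setIntegral_congr_fun measurableSet_Ioc
      intro y hy
      have h1 : 0 ≤ δ ^ 2 - (y - a) ^ 2 := by
        obtain ⟨h2, h3⟩ := hy; nlinarith
      simp [hg, max_eq_left h1]
    · intro y hy
      have h1 : δ ^ 2 - (y - a) ^ 2 ≤ 0 := by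
        simp only [Set.mem_Ioc, not_and_or, not_lt, not_le] at hy
        rcases hy with h | h <;> nlinarith
      simp [max_eq_right h1]
  rw [step2]
  have hderiv : ∀ y ∈ Set.uIcc (a - δ) (a + δ),
      HasDerivAt (fun y => F ((y - m) / σ)) (g y) y := by
    intro y _
    set u : ℝ := (y - m) / σ with hu
    have hΦ := hasDerivAt_stdNormalCDF u
    have hφ := hasDerivAt_stdNormalPDF u
    have huφ : HasDerivAt (fun u => u * stdNormalPDF u)
        (1 * stdNormalPDF u + u * (-u * stdNormalPDF u)) u :=
      (hasDerivAt_id u).mul hφ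
    have hFd : HasDerivAt F
        (A * stdNormalPDF u + σ ^ 2 * (1 * stdNormalPDF u + u * (-u * stdNormalPDF u))
          + B * (-u * stdNormalPDF u)) u :=
      ((hΦ.const_mul A).add (huφ.const_mul (σ ^ 2))).add (hφ.const_mul B)
    have hin : HasDerivAt (fun y : ℝ => (y - m) / σ) (1 / σ) y := by
      simpa using ((hasDerivAt_id y).sub_const m).div_const σ
    have := hFd.comp y hin
    refine this.congr_deriv ?_
    rw [hg]
    simp only [hpdf y]
    have hyu : y - m = σ * u := by rw [hu]; field_simp
    have hya : y - a = σ * u + (m - a) := by rw [← hyu]; ring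
    rw [hya, hA, hB]
    field_simp
    ring
  have hint : IntervalIntegrable g volume (a - δ) (a + δ) :=
    hgc.intervalIntegrable _ _
  rw [intervalIntegral.integral_eq_sub_of_hasDerivAt hderiv hint]
  have e1 : (a + δ - m) / σ = ((a + δ) - m) / σ := by ring_nf
  have e2 : (a - δ - m) / σ = ((a - δ) - m) / σ := by ring_nf
  rw [e1, e2, hF]
  ring
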